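/- Let v : [0, ∞) → ℝ satisfy -v'' + x·v = α·v, v(0) = 0, v ∈ L², ∫₀^∞ v² = 1, with v and v' decaying sufficiently fast at infinity. Then ∫₀^∞ x·v(x)² dx = (2/3)·α. Consequently, if v₁, v₂ are eigenfunctions with eigenvalues a₁ < a₂, then ∫₀^∞ x·(v₂² - v₁²) dx = (2/3)·(a₂ - a₁) > 0. -/

import Mathlib

open Real Set MeasureTheory Filter Topology

lemma aux_tendsto : Tendsto (fun x : ℝ => (1+x)^2 * exp (-x)) atTop (𝓝 0) := by
  have h0 := Real.tendsto_pow_mul_exp_neg_atTop_nhds_zero 0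
  have h1 := Real.tendsto_pow_mul_exp_neg_atTop_nhds_zero 1
  have h2 := Real.tendsto_pow_mul_exp_neg_atTop_nhds_zero 2
  have h := (h0.add ((h1.const_mul 2).add h2))
  simp only [add_zero, mul_zero] at h
  convert h using 2 with x
  ring

lemma aux_exp_tendsto : Tendsto (fun x : ℝ => exp (-x)) atTop (𝓝 0) := by
  simpa using Real.tendsto_pow_mul_exp_neg_atTop_nhds_zero 0

lemma aux_int (f : ℝ → ℝ) (hf : Continuous f) (D : ℝ)
    (hb : ∀ x ≥ (0:ℝ), |f x| ≤ D * ((1+x)^2 * exp (-2*x))) :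
    IntegrableOn f (Ioi (0:ℝ)) := by
  apply integrable_of_isBigO_exp_neg (b := 1) one_pos hf.continuousOn
  rw [Asymptotics.isBigO_iff]
  refine ⟨|D|, ?_⟩
  have hev : ∀ᶠ x in atTop, (1+x)^2 * exp (-x) ≤ 1 :=
    aux_tendsto.eventually (eventually_le_nhds one_pos)
  filter_upwards [hev, eventually_ge_atTop (0:ℝ)] with x h1 hx
  have hee : exp (-2*x) = exp (-x) * exp (-x) := by
    rw [← Real.exp_add]; ring_nf
  have h2 : |f x| ≤ D * ((1+x)^2 * exp (-2*x)) := hb x hx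
  have h3 : (0:ℝ) ≤ (1+x)^2 * exp (-2*x) := by positivity
  have h4 : D * ((1+x)^2 * exp (-2*x)) ≤ |D| * ((1+x)^2 * exp (-2*x)) :=
    mul_le_mul_of_nonneg_right (le_abs_self D) h3
  have h5 : |D| * ((1+x)^2 * exp (-2*x)) ≤ |D| * exp (-x) := by
    rw [hee]
    have : (1+x)^2 * (exp (-x) * exp (-x)) ≤ 1 * exp (-x) := by
      rw [← mul_assoc]
      exact mul_le_mul_of_nonneg_right h1 (exp_pos _).le
    nlinarith [abs_nonneg D, exp_pos (-x)]
  have : ‖f x‖ ≤ |D| * exp (-x) := by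
    calc ‖f x‖ = |f x| := rfl
    _ ≤ _ := h2.trans (h4.trans h5)
  simpa [Real.norm_eq_abs, abs_of_pos (exp_pos _)] using this

lemma aux_t0 (F : ℝ → ℝ) (D : ℝ)
    (hb : ∀ x ≥ (0:ℝ), |F x| ≤ D * ((1+x)^2 * exp (-2*x))) :
    Tendsto F atTop (𝓝 0) := by
  have hg : Tendsto (fun x : ℝ => D * ((1+x)^2 * exp (-2*x))) atTop (𝓝 0) := by
    have : ∀ x : ℝ, D * ((1+x)^2 * exp (-2*x)) = D * (((1+x)^2 * exp (-x)) * exp (-x)) := by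
      intro x
      rw [show exp (-2*x) = exp (-x) * exp (-x) by rw [← Real.exp_add]; ring_nf]
      ring
    simp only [this]
    simpa using (aux_tendsto.mul aux_exp_tendsto).const_mul D
  apply squeeze_zero_norm' _ hg
  filter_upwards [eventually_ge_atTop (0:ℝ)] with x hx
  exact hb x hx

lemma airy_main (v : ℝ → ℝ) (α C : ℝ)
    (hd : Differentiable ℝ v) (hd' : Differentiable ℝ (deriv v))
    (hODE : ∀ x > (0:ℝ), -(deriv (deriv v) x) + x * v x = α * v x)
    (h0 : v 0 = 0) (hn : ∫ x in Ioi (0:ℝ), v x ^ 2 = 1)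
    (hv : ∀ x ≥ (0:ℝ), |v x| ≤ C * exp (-x))
    (hv' : ∀ x ≥ (0:ℝ), |deriv v x| ≤ C * exp (-x)) :
    ∫ x in Ioi (0:ℝ), x * v x ^ 2 = 2/3 * α := by
  have hcv : Continuous v := hd.continuous
  have hcv' : Continuous (deriv v) := hd'.continuous
  -- key pointwise product bound
  have key : ∀ (a b : ℝ) (x : ℝ), 0 ≤ x → |a| ≤ C * exp (-x) → |b| ≤ C * exp (-x) →
      ∀ p : ℝ, 0 ≤ p → p ≤ (1+x)^2 → |p * (a * b)| ≤ C^2 * ((1+x)^2 * exp (-2*x)) := by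
    intro a b x hx ha hb p hp hple
    have hee : exp (-2*x) = exp (-x) * exp (-x) := by rw [← Real.exp_add]; ring_nf
    have h1 : |a * b| ≤ (C * exp (-x)) * (C * exp (-x)) := by
      rw [abs_mul]
      exact mul_le_mul ha hb (abs_nonneg _) ((abs_nonneg a).trans ha)
    have h2 : |p * (a * b)| = p * |a * b| := by rw [abs_mul, abs_of_nonneg hp]
    rw [h2, hee]
    calc p * |a * b| ≤ (1+x)^2 * ((C * exp (-x)) * (C * exp (-x))) :=
          mul_le_mul hple h1 (abs_nonneg _) (by positivity)
      _ = C^2 * ((1+x)^2 * (exp (-x) * exp (-x))) := by ring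
  have hone : ∀ x : ℝ, 0 ≤ x → (1:ℝ) ≤ (1+x)^2 := by intro x hx; nlinarith
  have hxle : ∀ x : ℝ, 0 ≤ x → x ≤ (1+x)^2 := by intro x hx; nlinarith
  have hx2le : ∀ x : ℝ, 0 ≤ x → x^2 ≤ (1+x)^2 := by intro x hx; nlinarith
  -- integrability of the five pieces
  have hp1 : IntegrableOn (fun x => v x ^ 2) (Ioi (0:ℝ)) := by
    apply aux_int _ (hcv.pow 2) (C^2)
    intro x hx
    have := key (v x) (v x) x hx (hv x hx) (hv x hx) 1 zero_le_one (hone x hx)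
    simpa [sq] using this
  have hp2 : IntegrableOn (fun x => x * v x ^ 2) (Ioi (0:ℝ)) := by
    apply aux_int _ (continuous_id.mul (hcv.pow 2)) (C^2)
    intro x hx
    have := key (v x) (v x) x hx (hv x hx) (hv x hx) x hx (hxle x hx)
    simpa [sq] using this
  have hp3 : IntegrableOn (fun x => deriv v x ^ 2) (Ioi (0:ℝ)) := by
    apply aux_int _ (hcv'.pow 2) (C^2)
    intro x hx
    have := key (deriv v x) (deriv v x) x hx (hv' x hx) (hv' x hx) 1 zero_le_one (hone x hx)
    simpa [sq] using this
  have hp4 : IntegrableOn (fun x => x * (v x * deriv v x)) (Ioi (0:ℝ)) := by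
    apply aux_int _ (continuous_id.mul (hcv.mul hcv')) (C^2)
    intro x hx
    exact key (v x) (deriv v x) x hx (hv x hx) (hv' x hx) x hx (hxle x hx)
  have hp5 : IntegrableOn (fun x => x^2 * (v x * deriv v x)) (Ioi (0:ℝ)) := by
    apply aux_int _ ((continuous_id.pow 2).mul (hcv.mul hcv')) (C^2)
    intro x hx
    exact key (v x) (deriv v x) x hx (hv x hx) (hv' x hx) (x^2) (sq_nonneg x) (hx2le x hx)
  -- second derivative formula on Ioi 0
  have hdd : ∀ x ∈ Ioi (0:ℝ), deriv (deriv v) x = x * v x - α * v x := by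
    intro x hx
    have := hODE x hx
    linarith
  -- FTC identities
  have ftc1 : ∫ x in Ioi (0:ℝ), (deriv v x ^ 2 + (x * v x ^ 2 - α * v x ^ 2)) = 0 := by
    have hder : ∀ x ∈ Ioi (0:ℝ), HasDerivAt (fun y => v y * deriv v y)
        (deriv v x ^ 2 + (x * v x ^ 2 - α * v x ^ 2)) x := by
      intro x hx
      have h := ((hd x).hasDerivAt).mul ((hd' x).hasDerivAt)
      refine h.congr_deriv ?_
      rw [hdd x hx]; ring
    have hint : IntegrableOn (fun x => deriv v x ^ 2 + (x * v x ^ 2 - α * v x ^ 2)) (Ioi (0:ℝ)) :=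
      hp3.add (hp2.sub (hp1.const_mul α))
    have htend : Tendsto (fun x => v x * deriv v x) atTop (𝓝 0) := by
      apply aux_t0 _ (C^2)
      intro x hx
      have := key (v x) (deriv v x) x hx (hv x hx) (hv' x hx) 1 zero_le_one (hone x hx)
      simpa using this
    have := integral_Ioi_of_hasDerivAt_of_tendsto
      ((hcv.mul hcv').continuousWithinAt) hder hint htend
    simpa [h0] using this
  have ftc2 : ∫ x in Ioi (0:ℝ),
      (deriv v x ^ 2 + (2 * (x^2 * (v x * deriv v x)) - 2*α * (x * (v x * deriv v x)))) = 0 := by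
    have hder : ∀ x ∈ Ioi (0:ℝ), HasDerivAt (fun y => y * deriv v y ^ 2)
        (deriv v x ^ 2 + (2 * (x^2 * (v x * deriv v x)) - 2*α * (x * (v x * deriv v x)))) x := by
      intro x hx
      have h := (hasDerivAt_id x).mul (((hd' x).hasDerivAt).pow 2)
      refine h.congr_deriv ?_
      simp only [id_eq, Pi.pow_apply]
      rw [hdd x hx]; ring
    have hint : IntegrableOn _ (Ioi (0:ℝ)) :=
      hp3.add ((hp5.const_mul 2).sub (hp4.const_mul (2*α)))
    have htend : Tendsto (fun x => x * deriv v x ^ 2) atTop (𝓝 0) := by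
      apply aux_t0 _ (C^2)
      intro x hx
      have := key (deriv v x) (deriv v x) x hx (hv' x hx) (hv' x hx) x hx (hxle x hx)
      simpa [sq] using this
    have := integral_Ioi_of_hasDerivAt_of_tendsto
      ((continuous_id.mul (hcv'.pow 2)).continuousWithinAt) hder hint htend
    simpa using this
  have ftc3 : ∫ x in Ioi (0:ℝ), (2 * (x * v x ^ 2) + 2 * (x^2 * (v x * deriv v x))) = 0 := by
    have hder : ∀ x ∈ Ioi (0:ℝ), HasDerivAt (fun y => y^2 * v y ^ 2)
        (2 * (x * v x ^ 2) + 2 * (x^2 * (v x * deriv v x))) x := by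
      intro x _
      have h := (hasDerivAt_pow 2 x).mul (((hd x).hasDerivAt).pow 2)
      refine h.congr_deriv ?_
      simp only [Pi.pow_apply]
      ring
    have hint : IntegrableOn _ (Ioi (0:ℝ)) := (hp2.const_mul 2).add (hp5.const_mul 2)
    have htend : Tendsto (fun x => x^2 * v x ^ 2) atTop (𝓝 0) := by
      apply aux_t0 _ (C^2)
      intro x hx
      have := key (v x) (v x) x hx (hv x hx) (hv x hx) (x^2) (sq_nonneg x) (hx2le x hx)
      simpa [sq] using this
    have := integral_Ioi_of_hasDerivAt_of_tendsto
      (((continuous_id.pow 2).mul (hcv.pow 2)).continuousWithinAt) hder hint htend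
    simpa [h0] using this
  have ftc4 : ∫ x in Ioi (0:ℝ), (v x ^ 2 + 2 * (x * (v x * deriv v x))) = 0 := by
    have hder : ∀ x ∈ Ioi (0:ℝ), HasDerivAt (fun y => y * v y ^ 2)
        (v x ^ 2 + 2 * (x * (v x * deriv v x))) x := by
      intro x _
      have h := (hasDerivAt_id x).mul (((hd x).hasDerivAt).pow 2)
      refine h.congr_deriv ?_
      simp only [id_eq, Pi.pow_apply]
      ring
    have hint : IntegrableOn _ (Ioi (0:ℝ)) := hp1.add (hp4.const_mul 2)
    have htend : Tendsto (fun x => x * v x ^ 2) atTop (𝓝 0) := by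
      apply aux_t0 _ (C^2)
      intro x hx
      have := key (v x) (v x) x hx (hv x hx) (hv x hx) x hx (hxle x hx)
      simpa [sq] using this
    have := integral_Ioi_of_hasDerivAt_of_tendsto
      ((continuous_id.mul (hcv.pow 2)).continuousWithinAt) hder hint htend
    simpa [h0] using this
  -- split the integrals
  set I1 := ∫ x in Ioi (0:ℝ), v x ^ 2 with hI1
  set I2 := ∫ x in Ioi (0:ℝ), x * v x ^ 2 with hI2
  set I3 := ∫ x in Ioi (0:ℝ), deriv v x ^ 2 with hI3
  set I4 := ∫ x in Ioi (0:ℝ), x * (v x * deriv v x) with hI4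
  set I5 := ∫ x in Ioi (0:ℝ), x^2 * (v x * deriv v x) with hI5
  have e1 : I3 + (I2 - α * I1) = 0 := by
    have hsub := integral_sub hp2 (hp1.const_mul α)
    have hadd := integral_add hp3 (hp2.sub (hp1.const_mul α))
    simp only [Pi.sub_apply, Pi.add_apply] at hsub hadd
    rw [integral_const_mul] at hsub
    linarith [hadd, hsub, ftc1]
  have e2 : I3 + (2 * I5 - 2*α * I4) = 0 := by
    have hsub := integral_sub (hp5.const_mul 2) (hp4.const_mul (2*α))
    have hadd := integral_add hp3 ((hp5.const_mul 2).sub (hp4.const_mul (2*α)))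
    simp only [Pi.sub_apply, Pi.add_apply] at hsub hadd
    rw [integral_const_mul, integral_const_mul] at hsub
    linarith [hadd, hsub, ftc2]
  have e3 : 2 * I2 + 2 * I5 = 0 := by
    have hadd := integral_add (hp2.const_mul 2) (hp5.const_mul 2)
    rw [integral_const_mul, integral_const_mul] at hadd
    linarith [hadd, ftc3]
  have e4 : I1 + 2 * I4 = 0 := by
    have hadd := integral_add hp1 (hp4.const_mul 2)
    rw [integral_const_mul] at hadd
    linarith [hadd, ftc4]
  have hI1v : I1 = 1 := hn
  have hI4v : I4 = -(1/2) := by rw [hI1v] at e4; linarith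
  have hI5v : I5 = -I2 := by linarith
  rw [hI4v, hI5v] at e2
  rw [hI1v] at e1
  have e2' : I3 - 2 * I2 + α = 0 := by linarith
  have e1' : I3 + I2 - α = 0 := by linarith
  show I2 = 2/3 * α
  linarith


theorem stmt9
    (v₁ v₂ : ℝ → ℝ) (a₁ a₂ : ℝ) (ha : a₁ < a₂)
    (hdiff₁ : Differentiable ℝ v₁) (hdiff₁' : Differentiable ℝ (deriv v₁))
    (hdiff₂ : Differentiable ℝ v₂) (hdiff₂' : Differentiable ℝ (deriv v₂))
    (hODE₁ : ∀ x > (0 : ℝ), -(deriv (deriv v₁) x) + x * v₁ x = a₁ * v₁ x)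
    (hODE₂ : ∀ x > (0 : ℝ), -(deriv (deriv v₂) x) + x * v₂ x = a₂ * v₂ x)
    (hv₁0 : v₁ 0 = 0) (hv₂0 : v₂ 0 = 0)
    (hnorm₁ : ∫ x in Ioi (0 : ℝ), v₁ x ^ 2 = 1)
    (hnorm₂ : ∫ x in Ioi (0 : ℝ), v₂ x ^ 2 = 1)
    (hdecay : ∃ C : ℝ, ∀ x ≥ (0 : ℝ),
      |v₁ x| ≤ C * Real.exp (-x) ∧ |deriv v₁ x| ≤ C * Real.exp (-x) ∧
      |v₂ x| ≤ C * Real.exp (-x) ∧ |deriv v₂ x| ≤ C * Real.exp (-x)) :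
    (∫ x in Ioi (0 : ℝ), x * v₁ x ^ 2 = (2 / 3) * a₁) ∧
    (∫ x in Ioi (0 : ℝ), x * v₂ x ^ 2 = (2 / 3) * a₂) ∧
    (∫ x in Ioi (0 : ℝ), x * (v₂ x ^ 2 - v₁ x ^ 2) = (2 / 3) * (a₂ - a₁)) ∧
    0 < (2 / 3 : ℝ) * (a₂ - a₁) := by
  obtain ⟨C, hC⟩ := hdecay
  have hv1 : ∀ x ≥ (0:ℝ), |v₁ x| ≤ C * exp (-x) := fun x hx => (hC x hx).1
  have hv1' : ∀ x ≥ (0:ℝ), |deriv v₁ x| ≤ C * exp (-x) := fun x hx => (hC x hx).2.1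
  have hv2 : ∀ x ≥ (0:ℝ), |v₂ x| ≤ C * exp (-x) := fun x hx => (hC x hx).2.2.1
  have hv2' : ∀ x ≥ (0:ℝ), |deriv v₂ x| ≤ C * exp (-x) := fun x hx => (hC x hx).2.2.2
  have h1 := airy_main v₁ a₁ C hdiff₁ hdiff₁' hODE₁ hv₁0 hnorm₁ hv1 hv1'
  have h2 := airy_main v₂ a₂ C hdiff₂ hdiff₂' hODE₂ hv₂0 hnorm₂ hv2 hv2'
  -- integrability of x * v² for the subtraction
  have hxle : ∀ x : ℝ, 0 ≤ x → x ≤ (1+x)^2 := by intro x hx; nlinarith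
  have hbd : ∀ (w : ℝ → ℝ), (∀ x ≥ (0:ℝ), |w x| ≤ C * exp (-x)) → Continuous w →
      IntegrableOn (fun x => x * w x ^ 2) (Ioi (0:ℝ)) := by
    intro w hw hcw
    apply aux_int _ (continuous_id.mul (hcw.pow 2)) (C^2)
    intro x hx
    have hee : exp (-2*x) = exp (-x) * exp (-x) := by rw [← Real.exp_add]; ring_nf
    have h1 : |w x * w x| ≤ (C * exp (-x)) * (C * exp (-x)) := by
      rw [abs_mul]
      exact mul_le_mul (hw x hx) (hw x hx) (abs_nonneg _) ((abs_nonneg _).trans (hw x hx))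
    have h2 : |x * w x ^ 2| = x * |w x * w x| := by
      rw [sq, abs_mul, abs_of_nonneg hx]
    show |x * w x ^ 2| ≤ C^2 * ((1+x)^2 * exp (-2*x))
    rw [h2, hee]
    calc x * |w x * w x| ≤ (1+x)^2 * ((C * exp (-x)) * (C * exp (-x))) :=
          mul_le_mul (hxle x hx) h1 (abs_nonneg _) (by positivity)
      _ = C^2 * ((1+x)^2 * (exp (-x) * exp (-x))) := by ring
  have hq1 := hbd v₁ hv1 hdiff₁.continuous
  have hq2 := hbd v₂ hv2 hdiff₂.continuous
  have h3 : ∫ x in Ioi (0:ℝ), x * (v₂ x ^ 2 - v₁ x ^ 2) = (2/3) * (a₂ - a₁) := by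
    simp only [mul_sub]
    rw [integral_sub hq2 hq1, h1, h2]
  exact ⟨h1, h2, h3, by linarith⟩
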